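/- Let m be a positive integer, r≥0 an integer, α>0, and X a Poisson random variable with mean α/m. Then for n≥0, E[(mX+r)_{n,λ}] = D^{(r)}_{m,λ}(n,α), i.e., e^{-α/m} Σ_{k=0}^∞ (mk+r)_{n,λ} (α/m)^k/k! = D^{(r)}_{m,λ}(n,α). -/

import Mathlib

open Finset

/-- Degenerate falling factorial `(x)_{n,λ} = x(x-λ)⋯(x-(n-1)λ)`. -/
noncomputable def dfall (lam x : ℝ) (n : ℕ) : ℝ := ∏ i ∈ Finset.range n, (x - i * lam)

/-- Ordinary falling factorial `(x)_n = x(x-1)⋯(x-n+1)`. -/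
noncomputable def ffall (x : ℝ) (n : ℕ) : ℝ := ∏ i ∈ Finset.range n, (x - i)

lemma dfall_zero' (lam x : ℝ) : dfall lam x 0 = 1 := by simp [dfall]

lemma dfall_succ' (lam x : ℝ) (n : ℕ) :
    dfall lam x (n + 1) = x * dfall lam (x - lam) n := by
  rw [dfall, dfall, Finset.prod_range_succ', mul_comm]
  congr 1
  · simp
  · exact Finset.prod_congr rfl fun i _ => by push_cast; ring

/-- The generating function. -/
noncomputable def Fgen (m : ℕ) (α lam ρ : ℝ) (t : ℝ) : ℝ :=
  (1 + lam * t) ^ (ρ / lam) * Real.exp ((α / m) * ((1 + lam * t) ^ ((m : ℝ) / lam) - 1))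

lemma iteratedDerivWithin_of_isOpen' {f : ℝ → ℝ} {s : Set ℝ} (hs : IsOpen s) {x : ℝ}
    (hx : x ∈ s) (n : ℕ) : iteratedDerivWithin n f s x = iteratedDeriv n f x := by
  rw [iteratedDerivWithin_eq_iteratedFDerivWithin, iteratedDeriv_eq_iteratedFDeriv,
    iteratedFDerivWithin_of_isOpen n hs hx]

lemma summable_dfall (lam : ℝ) (m : ℕ) (μ ρ : ℝ) (hμ : 0 ≤ μ) (n : ℕ) :
    Summable (fun k : ℕ => μ ^ k / (Nat.factorial k) * dfall lam ((m : ℝ) * k + ρ) n) := by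
  set C : ℝ := (m : ℝ) + |ρ| + n * |lam| with hC
  have hC0 : 0 ≤ C := by positivity
  apply Summable.of_norm_bounded (g := fun k => C ^ n * ((2 ^ n * μ) ^ k / (Nat.factorial k)))
    ((Real.summable_pow_div_factorial _).mul_left _)
  intro k
  have hd : |dfall lam ((m : ℝ) * k + ρ) n| ≤ (C * (k + 1)) ^ n := by
    rw [dfall, Finset.abs_prod]
    calc (∏ i ∈ Finset.range n, |(m : ℝ) * k + ρ - i * lam|)
        ≤ ∏ _i ∈ Finset.range n, (C * (k + 1)) := by
          apply Finset.prod_le_prod (fun i _ => abs_nonneg _)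
          intro i hi
          have hi' : (i : ℝ) ≤ n := by
            exact_mod_cast (Finset.mem_range.1 hi).le
          have h1 : |(m : ℝ) * k + ρ - i * lam| ≤ |(m : ℝ) * k + ρ| + |(i : ℝ) * lam| :=
            abs_sub _ _
          have h2 : |(m : ℝ) * k + ρ| ≤ (m : ℝ) * k + |ρ| := by
            refine (abs_add_le _ _).trans ?_
            rw [abs_of_nonneg (by positivity)]
          have h3 : |(i : ℝ) * lam| = (i : ℝ) * |lam| := by
            rw [abs_mul, Nat.abs_cast]
          have hk0 : (0 : ℝ) ≤ (k : ℝ) := Nat.cast_nonneg k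
          have hm0 : (0 : ℝ) ≤ (m : ℝ) := Nat.cast_nonneg m
          have hl0 : (0 : ℝ) ≤ |lam| := abs_nonneg _
          have hr0 : (0 : ℝ) ≤ |ρ| := abs_nonneg _
          rw [h3] at h1
          rw [hC]
          have hn0 : (0:ℝ) ≤ (n:ℝ) := Nat.cast_nonneg n
          nlinarith [mul_le_mul_of_nonneg_right hi' hl0, mul_nonneg hr0 hk0,
            mul_nonneg (mul_nonneg hn0 hl0) hk0, mul_nonneg hm0 hk0]
      _ = (C * (k + 1)) ^ n := by rw [Finset.prod_const, Finset.card_range]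
  have hk2 : ((k : ℝ) + 1) ^ n ≤ ((2 : ℝ) ^ n) ^ k := by
    have h1 : ((k : ℝ) + 1) ≤ (2 : ℝ) ^ k := by
      exact_mod_cast Nat.succ_le_of_lt (Nat.lt_two_pow_self (n := k))
    calc ((k : ℝ) + 1) ^ n ≤ ((2 : ℝ) ^ k) ^ n :=
          pow_le_pow_left₀ (by positivity) h1 n
      _ = ((2 : ℝ) ^ n) ^ k := by rw [← pow_mul, ← pow_mul, mul_comm]
  have hfact : (0 : ℝ) < (Nat.factorial k : ℝ) := by
    exact_mod_cast Nat.factorial_pos k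
  calc ‖μ ^ k / (Nat.factorial k : ℝ) * dfall lam ((m : ℝ) * k + ρ) n‖
      = μ ^ k / (Nat.factorial k : ℝ) * |dfall lam ((m : ℝ) * k + ρ) n| := by
        rw [Real.norm_eq_abs, abs_mul, abs_of_nonneg (by positivity)]
    _ ≤ μ ^ k / (Nat.factorial k : ℝ) * (C * (k + 1)) ^ n := by
        apply mul_le_mul_of_nonneg_left hd (by positivity)
    _ = C ^ n * (((k : ℝ) + 1) ^ n * (μ ^ k / (Nat.factorial k : ℝ))) := by
        rw [mul_pow]; ring
    _ ≤ C ^ n * (((2 : ℝ) ^ n) ^ k * (μ ^ k / (Nat.factorial k : ℝ))) := by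
        apply mul_le_mul_of_nonneg_left _ (by positivity)
        apply mul_le_mul_of_nonneg_right hk2 (by positivity)
    _ = C ^ n * ((2 ^ n * μ) ^ k / (Nat.factorial k : ℝ)) := by
        rw [mul_pow]; ring

lemma key (m : ℕ) (hm : 0 < m) (α lam : ℝ) (hα : 0 < α) (hlam : lam ≠ 0) :
    ∀ (n : ℕ) (ρ : ℝ),
      Real.exp (-(α / m)) *
          ∑' k : ℕ, (α / m) ^ k / (Nat.factorial k) * dfall lam ((m : ℝ) * k + ρ) n
        = iteratedDeriv n (Fgen m α lam ρ) 0 := by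
  have hm' : ((m : ℝ)) ≠ 0 := Nat.cast_ne_zero.2 hm.ne'
  have hμ : 0 < α / m := div_pos hα (by exact_mod_cast hm)
  set S : Set ℝ := {t | 0 < 1 + lam * t} with hSdef
  have hSopen : IsOpen S := isOpen_lt continuous_const (by fun_prop)
  have h0S : (0 : ℝ) ∈ S := by simp [hSdef]
  -- derivative of Fgen
  have hderiv : ∀ (ρ : ℝ) (t : ℝ), t ∈ S →
      HasDerivAt (Fgen m α lam ρ)
        (ρ * Fgen m α lam (ρ - lam) t + α * Fgen m α lam (ρ + m - lam) t) t := by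
    intro ρ t ht
    have hu : (0 : ℝ) < 1 + lam * t := ht
    have h0 : HasDerivAt (fun t : ℝ => 1 + lam * t) lam t := by
      simpa using ((hasDerivAt_id t).const_mul lam).const_add 1
    have hpow : ∀ a : ℝ, HasDerivAt (fun t : ℝ => (1 + lam * t) ^ a)
        (lam * a * (1 + lam * t) ^ (a - 1)) t :=
      fun a => h0.rpow_const (Or.inl hu.ne')
    have hg : HasDerivAt (fun t : ℝ => (α / m) * ((1 + lam * t) ^ ((m : ℝ) / lam) - 1))
        ((α / m) * (lam * ((m : ℝ) / lam) * (1 + lam * t) ^ ((m : ℝ) / lam - 1))) t :=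
      ((hpow _).sub_const 1).const_mul _
    have hE := hg.exp
    have hmul := (hpow (ρ / lam)).mul hE
    have e1 : (ρ - lam) / lam = ρ / lam - 1 := by field_simp
    have e2 : lam * ((m : ℝ) / lam) = (m : ℝ) := by field_simp
    have e3 : lam * (ρ / lam) = ρ := by field_simp
    have e5 : (α / m) * (m : ℝ) = α := by field_simp
    have e4 : (1 + lam * t) ^ ((ρ + m - lam) / lam)
        = (1 + lam * t) ^ (ρ / lam) * (1 + lam * t) ^ ((m : ℝ) / lam - 1) := by
      rw [← Real.rpow_add hu]
      congr 1
      field_simp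
      ring
    convert hmul using 1
    · rfl
    · rfl
    · rfl
    simp only [Fgen]
    rw [e1, e4]
    set E := Real.exp ((α / m) * ((1 + lam * t) ^ ((m : ℝ) / lam) - 1)) with hE'
    set A0 := (1 + lam * t) ^ (ρ / lam) with hA0
    set A1 := (1 + lam * t) ^ (ρ / lam - 1) with hA1
    set A2 := (1 + lam * t) ^ ((m : ℝ) / lam - 1) with hA2
    linear_combination (-(A1 * E)) * e3 + (-(A0 * E * A2 * (α / m))) * e2 + (-(A0 * E * A2)) * e5
  -- smoothness of Fgen on S
  have hcont : ∀ (ρ : ℝ) (n : ℕ), ContDiffOn ℝ n (Fgen m α lam ρ) S := by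
    intro ρ n
    have hb : ContDiffOn ℝ n (fun t : ℝ => 1 + lam * t) S :=
      (contDiff_const.add (contDiff_const.mul contDiff_id)).contDiffOn
    have hne : ∀ t ∈ S, (1 + lam * t) ≠ 0 := fun t ht =>
      (show (0 : ℝ) < 1 + lam * t from ht).ne'
    exact (hb.rpow_const_of_ne hne).mul
      ((contDiffOn_const.mul ((hb.rpow_const_of_ne hne).sub contDiffOn_const)).exp)
  -- recurrence for the iterated derivatives
  have hG : ∀ (n : ℕ) (ρ : ℝ), iteratedDeriv (n + 1) (Fgen m α lam ρ) 0
      = ρ * iteratedDeriv n (Fgen m α lam (ρ - lam)) 0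
        + α * iteratedDeriv n (Fgen m α lam (ρ + m - lam)) 0 := by
    intro n ρ
    rw [iteratedDeriv_succ']
    have hev : deriv (Fgen m α lam ρ) =ᶠ[nhds 0]
        fun t => ρ * Fgen m α lam (ρ - lam) t + α * Fgen m α lam (ρ + m - lam) t := by
      filter_upwards [hSopen.mem_nhds h0S] with t ht
      exact (hderiv ρ t ht).deriv
    rw [hev.iteratedDeriv_eq n]
    have hud : UniqueDiffOn ℝ S := hSopen.uniqueDiffOn
    rw [← iteratedDerivWithin_of_isOpen' hSopen h0S n]
    have hsplit : (fun t => ρ * Fgen m α lam (ρ - lam) t + α * Fgen m α lam (ρ + m - lam) t)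
        = (fun t => ρ * Fgen m α lam (ρ - lam) t) + (fun t => α * Fgen m α lam (ρ + m - lam) t) :=
      rfl
    rw [hsplit, iteratedDerivWithin_add h0S hud
        ((contDiffOn_const.mul (hcont (ρ - lam) n)).contDiffWithinAt h0S) ((contDiffOn_const.mul (hcont (ρ + m - lam) n)).contDiffWithinAt h0S),
      iteratedDerivWithin_const_mul h0S hud _ ((hcont (ρ - lam) n).contDiffWithinAt h0S),
      iteratedDerivWithin_const_mul h0S hud _ ((hcont (ρ + m - lam) n).contDiffWithinAt h0S),
      iteratedDerivWithin_of_isOpen' hSopen h0S n, iteratedDerivWithin_of_isOpen' hSopen h0S n]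
  -- recurrence for the moments
  have hA : ∀ (n : ℕ) (ρ : ℝ),
      (∑' k : ℕ, (α / m) ^ k / (Nat.factorial k) * dfall lam ((m : ℝ) * k + ρ) (n + 1))
        = ρ * ∑' k : ℕ, (α / m) ^ k / (Nat.factorial k) * dfall lam ((m : ℝ) * k + (ρ - lam)) n
          + α * ∑' k : ℕ, (α / m) ^ k / (Nat.factorial k)
              * dfall lam ((m : ℝ) * k + (ρ + m - lam)) n := by
    intro n ρ
    have S1 := summable_dfall lam m (α / m) (ρ - lam) hμ.le n
    have S2 := summable_dfall lam m (α / m) (ρ + m - lam) hμ.le n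
    set f : ℕ → ℝ := fun k =>
      (m : ℝ) * k * ((α / m) ^ k / (Nat.factorial k)) * dfall lam ((m : ℝ) * k + (ρ - lam)) n
      with hf
    have hfsucc : ∀ k : ℕ, f (k + 1)
        = α * ((α / m) ^ k / (Nat.factorial k) * dfall lam ((m : ℝ) * k + (ρ + m - lam)) n) := by
      intro k
      have harg : (m : ℝ) * (k + 1 : ℕ) + (ρ - lam) = (m : ℝ) * k + (ρ + m - lam) := by
        push_cast; ring
      have hfac : ((Nat.factorial (k + 1) : ℝ)) = (k + 1) * Nat.factorial k := by
        rw [Nat.factorial_succ]; push_cast; ring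
      rw [hf]
      simp only []
      rw [harg, hfac]
      have hk1 : ((k : ℝ) + 1) ≠ 0 := by positivity
      have hfk : ((Nat.factorial k : ℝ)) ≠ 0 := by
        exact_mod_cast (Nat.factorial_pos k).ne'
      push_cast
      field_simp
      rw [pow_succ]
      field_simp
    have hfs : Summable f := by
      refine (summable_nat_add_iff 1).1 ?_
      apply Summable.congr (S2.mul_left α)
      intro k
      exact (hfsucc k).symm
    have step1 : (∑' k : ℕ, (α / m) ^ k / (Nat.factorial k) * dfall lam ((m : ℝ) * k + ρ) (n + 1))
        = ∑' k : ℕ, (ρ * ((α / m) ^ k / (Nat.factorial k)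
            * dfall lam ((m : ℝ) * k + (ρ - lam)) n) + f k) := by
      apply tsum_congr
      intro k
      have harg : (m : ℝ) * k + ρ - lam = (m : ℝ) * k + (ρ - lam) := by ring
      rw [dfall_succ', harg, hf]
      ring
    rw [step1, Summable.tsum_add (S1.mul_left ρ) hfs, tsum_mul_left]
    congr 1
    have hf0 : f 0 = 0 := by simp [hf]
    rw [Summable.tsum_eq_zero_add hfs, hf0, zero_add]
    rw [tsum_congr hfsucc, tsum_mul_left]
  -- main induction
  intro n
  induction n with
  | zero =>
    intro ρ
    have hexp : (∑' k : ℕ, (α / m) ^ k / (Nat.factorial k : ℝ)) = Real.exp (α / m) := by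
      rw [Real.exp_eq_exp_ℝ, NormedSpace.exp_eq_tsum_div]
    simp only [dfall_zero', mul_one, iteratedDeriv_zero, Fgen]
    rw [hexp, ← Real.exp_add, neg_add_cancel, Real.exp_zero]
    norm_num
  | succ n ih =>
    intro ρ
    rw [hA n ρ, hG n ρ, ← ih (ρ - lam), ← ih (ρ + m - lam)]
    ring

theorem stmt5 (m : ℕ) (hm : 0 < m) (r : ℕ) (α lam : ℝ) (hα : 0 < α) (hlam : lam ≠ 0)
    (D : ℕ → ℝ)
    (hD : ∀ n : ℕ, iteratedDeriv n
        (fun t : ℝ => (1 + lam * t) ^ ((r : ℝ) / lam) *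
          Real.exp ((α / m) * ((1 + lam * t) ^ ((m : ℝ) / lam) - 1))) 0 = D n) :
    ∀ n : ℕ,
      Real.exp (-(α / m)) *
        ∑' k : ℕ, dfall lam ((m : ℝ) * k + r) n * (α / m) ^ k / (Nat.factorial k) = D n := by
  intro n
  have hfun : (fun t : ℝ => (1 + lam * t) ^ ((r : ℝ) / lam) *
      Real.exp ((α / m) * ((1 + lam * t) ^ ((m : ℝ) / lam) - 1))) = Fgen m α lam r := rfl
  rw [← hD n, hfun, ← key m hm α lam hα hlam n r]
  congr 1
  exact tsum_congr fun k => by ring
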